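/- Let X₁, X₂ ⊆ ℂⁿ be disjoint compact sets and let S₁ ⊆ X₁, S₂ ⊆ X₂ be relatively open subsets with S₁ ⊆ X̂₂ and S₂ ⊆ X̂₁. Then the polynomial hull of X₁ ∪ X₂ equals the polynomial hull of (X₁ \ S₁) ∪ (X₂ \ S₂). -/

import Mathlib

open Set

/-- The polynomial hull of a set `S ⊆ ℂⁿ`. -/
def polyHull (n : ℕ) (S : Set (Fin n → ℂ)) : Set (Fin n → ℂ) :=
  {x | ∀ Q : MvPolynomial (Fin n) ℂ,
    ‖MvPolynomial.eval x Q‖ ≤ sSup ((fun y => ‖MvPolynomial.eval y Q‖) '' S)}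

namespace PolyHullAux

open MvPolynomial Filter Nat

variable {n : ℕ}

/-- Sup of `‖eval · Q‖` over a set. -/
noncomputable def supN (A : Set (Fin n → ℂ)) (Q : MvPolynomial (Fin n) ℂ) : ℝ :=
  sSup ((fun y => ‖eval y Q‖) '' A)

lemma contQ (Q : MvPolynomial (Fin n) ℂ) :
    Continuous fun x : Fin n → ℂ => ‖eval x Q‖ :=
  (MvPolynomial.continuous_eval Q).norm


lemma exists_max {A : Set (Fin n → ℂ)} (hA : IsCompact A) (hne : A.Nonempty)
    {f : (Fin n → ℂ) → ℝ} (hf : Continuous f) : ∃ a ∈ A, ∀ b ∈ A, f b ≤ f a := by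
  obtain ⟨a, ha, hmax⟩ := hA.exists_isMaxOn hne hf.continuousOn
  exact ⟨a, ha, fun b hb => hmax hb⟩

lemma bddAbove_img {A : Set (Fin n → ℂ)} (hA : IsCompact A) (Q : MvPolynomial (Fin n) ℂ) :
    BddAbove ((fun y => ‖eval y Q‖) '' A) :=
  (hA.image (contQ Q)).bddAbove

lemma le_supN {A : Set (Fin n → ℂ)} (hA : IsCompact A) {x : Fin n → ℂ} (hx : x ∈ A)
    (Q : MvPolynomial (Fin n) ℂ) : ‖eval x Q‖ ≤ supN A Q :=
  le_csSup (bddAbove_img hA Q) ⟨x, hx, rfl⟩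

lemma supN_le {A : Set (Fin n → ℂ)} {Q : MvPolynomial (Fin n) ℂ} {M : ℝ} (hM : 0 ≤ M)
    (h : ∀ x ∈ A, ‖eval x Q‖ ≤ M) : supN A Q ≤ M := by
  rcases A.eq_empty_or_nonempty with rfl | hne
  · simp [supN, Real.sSup_empty, hM]
  · exact csSup_le (hne.image _) (by rintro _ ⟨x, hx, rfl⟩; exact h x hx)

lemma supN_nonneg {A : Set (Fin n → ℂ)} (hA : IsCompact A) (Q : MvPolynomial (Fin n) ℂ) :
    0 ≤ supN A Q := by
  rcases A.eq_empty_or_nonempty with rfl | ⟨x, hx⟩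
  · simp [supN, Real.sSup_empty]
  · exact (norm_nonneg _).trans (le_supN hA hx Q)

lemma supN_mono {A B : Set (Fin n → ℂ)} (hB : IsCompact B) (hAB : A ⊆ B)
    (Q : MvPolynomial (Fin n) ℂ) : supN A Q ≤ supN B Q :=
  supN_le (supN_nonneg hB Q) fun x hx => le_supN hB (hAB hx) Q

lemma supN_eq_max {A : Set (Fin n → ℂ)} (hA : IsCompact A) {Q : MvPolynomial (Fin n) ℂ}
    {a : Fin n → ℂ} (ha : a ∈ A) (hmax : ∀ b ∈ A, ‖eval b Q‖ ≤ ‖eval a Q‖) :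
    supN A Q = ‖eval a Q‖ :=
  le_antisymm (supN_le (norm_nonneg _) hmax) (le_supN hA ha Q)

set_option maxHeartbeats 1000000 in
/-- Tail estimate for the exponential series. -/
lemma exp_tail {z : ℂ} {W : ℝ} (hz : ‖z‖ ≤ W) (k : ℕ) :
    ‖Complex.exp z - ∑ j ∈ Finset.range k, ((j ! : ℂ))⁻¹ * z ^ j‖
      ≤ Real.exp W - ∑ j ∈ Finset.range k, W ^ j / (j ! : ℝ) := by
  have hsC : HasSum (fun j : ℕ => ((j ! : ℂ))⁻¹ * z ^ j) (Complex.exp z) := by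
    have h := NormedSpace.exp_series_hasSum_exp' (𝕂 := ℂ) z
    simpa [Complex.exp_eq_exp_ℂ, smul_eq_mul] using h
  have hsR : HasSum (fun j : ℕ => W ^ j / (j ! : ℝ)) (Real.exp W) := by
    have h := NormedSpace.exp_series_hasSum_exp' (𝕂 := ℝ) W
    simpa [Real.exp_eq_exp_ℝ, smul_eq_mul, div_eq_inv_mul, mul_comm] using h
  have hbound : ∀ j : ℕ, ‖((j ! : ℂ))⁻¹ * z ^ j‖ ≤ W ^ j / (j ! : ℝ) := by
    intro j
    rw [norm_mul, norm_inv, norm_pow]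
    have h1 : ‖((j ! : ℕ) : ℂ)‖ = ((j ! : ℕ) : ℝ) := by
      simp
    rw [h1, div_eq_inv_mul]
    have : ‖z‖ ^ j ≤ W ^ j := pow_le_pow_left₀ (norm_nonneg z) hz j
    have h2 : (0:ℝ) ≤ ((j ! : ℕ) : ℝ)⁻¹ := by positivity
    exact mul_le_mul_of_nonneg_left this h2
  have hC := Summable.sum_add_tsum_nat_add k hsC.summable
  have hR := Summable.sum_add_tsum_nat_add k hsR.summable
  rw [hsC.tsum_eq] at hC
  rw [hsR.tsum_eq] at hR
  have hdiff : Complex.exp z - ∑ j ∈ Finset.range k, ((j ! : ℂ))⁻¹ * z ^ j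
      = ∑' i : ℕ, (((i + k)! : ℂ))⁻¹ * z ^ (i + k) := by
    rw [← hC]; ring
  have hdiffR : Real.exp W - ∑ j ∈ Finset.range k, W ^ j / (j ! : ℝ)
      = ∑' i : ℕ, W ^ (i + k) / ((i + k)! : ℝ) := by
    rw [← hR]; ring
  rw [hdiff, hdiffR]
  have hsumnormtail : Summable fun i : ℕ => ‖(((i + k)! : ℂ))⁻¹ * z ^ (i + k)‖ := by
    have h := (NormedSpace.norm_expSeries_summable' (𝕂 := ℂ) z)
    have h' : Summable fun j : ℕ => ‖((j ! : ℂ))⁻¹ * z ^ j‖ := by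
      simpa [smul_eq_mul] using h
    exact (summable_nat_add_iff k).2 h'
  have hsumRtail : Summable fun i : ℕ => W ^ (i + k) / ((i + k)! : ℝ) :=
    (summable_nat_add_iff k).2 hsR.summable
  calc ‖∑' i : ℕ, (((i + k)! : ℂ))⁻¹ * z ^ (i + k)‖
      ≤ ∑' i : ℕ, ‖(((i + k)! : ℂ))⁻¹ * z ^ (i + k)‖ := norm_tsum_le_tsum_norm hsumnormtail
    _ ≤ ∑' i : ℕ, W ^ (i + k) / ((i + k)! : ℝ) :=
        Summable.tsum_le_tsum (fun i => hbound (i + k)) hsumnormtail hsumRtail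

/-- Core contradiction lemma: a point of the hull of `Y` where `‖Q‖` attains the
maximum `M` of `‖Q‖` on `Y ∪ {p}`, but separated from the maximum set of `Y` by a
real-linear functional, yields a contradiction. -/
lemma core {Y : Set (Fin n → ℂ)} (hY : IsCompact Y) {p : Fin n → ℂ}
    (hp : ∀ P : MvPolynomial (Fin n) ℂ, ‖eval p P‖ ≤ supN Y P)
    {Q : MvPolynomial (Fin n) ℂ} {M : ℝ} (hM0 : 0 < M)
    (hMY : ∀ y ∈ Y, ‖eval y Q‖ ≤ M) (hQp : ‖eval p Q‖ = M)
    (c : Fin n → ℂ) {β : ℝ}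
    (hβ : ∀ y ∈ Y, ‖eval y Q‖ = M → (∑ j, c j * y j).re ≤ β)
    (hgap : β < (∑ j, c j * p j).re) : False := by
  classical
  set ℓ : MvPolynomial (Fin n) ℂ := ∑ j, MvPolynomial.C (c j) * MvPolynomial.X j with hldef
  have hw : ∀ x : Fin n → ℂ, eval x ℓ = ∑ j, c j * x j := by
    intro x; simp [hldef]
  set u : (Fin n → ℂ) → ℝ := fun x => (eval x ℓ).re with hudef
  have hu_eq : ∀ x, u x = (∑ j, c j * x j).re := fun x => by rw [hudef]; simp [hw]
  have hu_cont : Continuous u := Complex.continuous_re.comp (MvPolynomial.continuous_eval ℓ)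
  -- the bound W
  have hKc : IsCompact (insert p Y) := hY.insert p
  obtain ⟨z₀, hz₀, hz₀max⟩ := exists_max hKc ⟨p, mem_insert _ _⟩ ((MvPolynomial.continuous_eval ℓ).norm)
  set W := ‖eval z₀ ℓ‖ with hWdef
  have hW0 : 0 ≤ W := norm_nonneg _
  have hWb : ∀ x ∈ insert p Y, ‖eval x ℓ‖ ≤ W := hz₀max
  have huW : ∀ x ∈ insert p Y, u x ≤ W := fun x hx => by
    have h1 : (eval x ℓ).re ≤ ‖eval x ℓ‖ := by
      exact Complex.re_le_norm _
    exact (by rw [hudef] : u x = (eval x ℓ).re) ▸ h1.trans (hWb x hx)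
  set α := u p with halph
  have hgap' : β < α := by rw [halph, hu_eq]; exact hgap
  set δ := (α - β) / 2 with hδdef
  have hδ : 0 < δ := by rw [hδdef]; linarith
  -- the set A and θ
  set A := Y ∩ u ⁻¹' Ici (β + δ) with hAdef
  have hAc : IsCompact A := hY.inter_right (isClosed_Ici.preimage hu_cont)
  set θ := supN A Q with hθdef
  have hθ0 : 0 ≤ θ := supN_nonneg hAc Q
  have hθM : θ < M := by
    rcases A.eq_empty_or_nonempty with he | hne
    · rw [hθdef, he]; simpa [supN, Real.sSup_empty] using hM0
    · obtain ⟨a, ha, hamax⟩ := exists_max hAc hne (contQ Q)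
      have heq : θ = ‖eval a Q‖ := by rw [hθdef]; exact supN_eq_max hAc ha hamax
      rw [heq]
      rcases lt_or_eq_of_le (hMY a ha.1) with h | h
      · exact h
      · exfalso
        have h1 : u a ≤ β := by rw [hu_eq]; exact hβ a ha.1 h
        have h2 : β + δ ≤ u a := ha.2
        linarith
  -- choose N
  obtain ⟨N, hN⟩ := exists_pow_lt_of_lt_one (Real.exp_pos (α - W)) ((div_lt_one hM0).2 hθM)
  have hMN : 0 < M ^ N := pow_pos hM0 N
  have hθN : θ ^ N * Real.exp W < M ^ N * Real.exp α := by
    have h1 : θ ^ N = (θ / M) ^ N * M ^ N := by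
      rw [div_pow, div_mul_cancel₀]
      exact ne_of_gt hMN
    have he : Real.exp (α - W) * Real.exp W = Real.exp α := by
      rw [← Real.exp_add]; norm_num
    calc θ ^ N * Real.exp W = (θ / M) ^ N * (M ^ N * Real.exp W) := by rw [h1]; ring
      _ < Real.exp (α - W) * (M ^ N * Real.exp W) :=
          mul_lt_mul_of_pos_right hN (by positivity)
      _ = M ^ N * Real.exp α := by rw [← he]; ring
  set C1 := max (θ ^ N * Real.exp W) (M ^ N * Real.exp (β + δ)) with hC1def
  have hβδα : β + δ < α := by rw [hδdef]; linarith
  have hC1 : C1 < M ^ N * Real.exp α :=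
    max_lt hθN (mul_lt_mul_of_pos_left (Real.exp_lt_exp.2 hβδα) hMN)
  have hC1_0 : 0 ≤ C1 := le_trans (by positivity : (0:ℝ) ≤ M ^ N * Real.exp (β + δ))
    (le_max_right _ _)
  set G := M ^ N * Real.exp α - C1 with hGdef
  have hG0 : 0 < G := by rw [hGdef]; linarith
  -- the tail
  have hsR : HasSum (fun j : ℕ => W ^ j / (j ! : ℝ)) (Real.exp W) := by
    have h := NormedSpace.exp_series_hasSum_exp' (𝕂 := ℝ) W
    simpa [Real.exp_eq_exp_ℝ, smul_eq_mul, div_eq_inv_mul, mul_comm] using h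
  set t : ℕ → ℝ := fun k => Real.exp W - ∑ j ∈ Finset.range k, W ^ j / (j ! : ℝ) with htdef
  have ht0 : ∀ k, 0 ≤ t k := by
    intro k
    have h := sum_le_hasSum (Finset.range k) (fun j _ => by positivity) hsR
    rw [htdef]; simp only; linarith
  -- key inequality for every k
  have key : ∀ k : ℕ, G ≤ 2 * M ^ N * t k := by
    intro k
    set Ek : MvPolynomial (Fin n) ℂ :=
      ∑ j ∈ Finset.range k, MvPolynomial.C (((j ! : ℕ) : ℂ))⁻¹ * ℓ ^ j with hEkdef
    have hEkeval : ∀ x : Fin n → ℂ,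
        eval x Ek = ∑ j ∈ Finset.range k, ((j ! : ℂ))⁻¹ * (eval x ℓ) ^ j := by
      intro x; simp [hEkdef]
    have htail : ∀ x ∈ insert p Y, ‖Complex.exp (eval x ℓ) - eval x Ek‖ ≤ t k := by
      intro x hx
      rw [hEkeval, htdef]
      exact exp_tail (hWb x hx) k
    have hexp_norm : ∀ x : Fin n → ℂ, ‖Complex.exp (eval x ℓ)‖ = Real.exp (u x) := by
      intro x
      rw [Complex.norm_exp, hudef]
    have hEk_up : ∀ x ∈ insert p Y, ‖eval x Ek‖ ≤ Real.exp (u x) + t k := by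
      intro x hx
      have h1 := norm_sub_norm_le (eval x Ek) (Complex.exp (eval x ℓ))
      rw [norm_sub_rev] at h1
      have h2 := htail x hx
      have h3 := hexp_norm x
      linarith
    have hEk_lo : Real.exp α - t k ≤ ‖eval p Ek‖ := by
      have h1 := norm_sub_norm_le (Complex.exp (eval p ℓ)) (eval p Ek)
      have h2 := htail p (mem_insert _ _)
      have h3 := hexp_norm p
      rw [halph]; linarith
    have hevalPQ : ∀ x : Fin n → ℂ,
        ‖eval x (Q ^ N * Ek)‖ = ‖eval x Q‖ ^ N * ‖eval x Ek‖ := by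
      intro x; rw [map_mul, map_pow, norm_mul, norm_pow]
    -- upper bound over Y
    have hupY : supN Y (Q ^ N * Ek) ≤ C1 + M ^ N * t k := by
      apply supN_le (add_nonneg hC1_0 (mul_nonneg hMN.le (ht0 k)))
      intro y hy
      rw [hevalPQ]
      have hyK : y ∈ insert p Y := mem_insert_of_mem _ hy
      have hEky := hEk_up y hyK
      have hEky0 : (0:ℝ) ≤ ‖eval y Ek‖ := norm_nonneg _
      by_cases hcase : β + δ ≤ u y
      · have hyA : y ∈ A := ⟨hy, hcase⟩
        have hQA : ‖eval y Q‖ ≤ θ := le_supN hAc hyA Q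
        have h1 : ‖eval y Q‖ ^ N ≤ θ ^ N := pow_le_pow_left₀ (norm_nonneg _) hQA N
        have h2 : Real.exp (u y) ≤ Real.exp W := Real.exp_le_exp.2 (huW y hyK)
        have h3 : θ ^ N ≤ M ^ N := pow_le_pow_left₀ hθ0 hθM.le N
        calc ‖eval y Q‖ ^ N * ‖eval y Ek‖
            ≤ θ ^ N * (Real.exp (u y) + t k) := by
              apply mul_le_mul h1 hEky hEky0 (by positivity)
          _ = θ ^ N * Real.exp (u y) + θ ^ N * t k := by ring
          _ ≤ θ ^ N * Real.exp W + M ^ N * t k := by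
              have := mul_le_mul_of_nonneg_left h2 (by positivity : (0:ℝ) ≤ θ ^ N)
              have := mul_le_mul_of_nonneg_right h3 (ht0 k)
              linarith
          _ ≤ C1 + M ^ N * t k := by
              have := le_max_left (θ ^ N * Real.exp W) (M ^ N * Real.exp (β + δ))
              rw [hC1def]; linarith
      · push_neg at hcase
        have h1 : ‖eval y Q‖ ^ N ≤ M ^ N := pow_le_pow_left₀ (norm_nonneg _) (hMY y hy) N
        have h2 : Real.exp (u y) ≤ Real.exp (β + δ) := Real.exp_le_exp.2 hcase.le
        calc ‖eval y Q‖ ^ N * ‖eval y Ek‖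
            ≤ M ^ N * (Real.exp (u y) + t k) := by
              apply mul_le_mul h1 hEky hEky0 hMN.le
          _ = M ^ N * Real.exp (u y) + M ^ N * t k := by ring
          _ ≤ M ^ N * Real.exp (β + δ) + M ^ N * t k := by
              have := mul_le_mul_of_nonneg_left h2 hMN.le
              linarith
          _ ≤ C1 + M ^ N * t k := by
              have := le_max_right (θ ^ N * Real.exp W) (M ^ N * Real.exp (β + δ))
              rw [hC1def]; linarith
    -- lower bound at p
    have hloP : M ^ N * (Real.exp α - t k) ≤ ‖eval p (Q ^ N * Ek)‖ := by
      rw [hevalPQ, hQp]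
      exact mul_le_mul_of_nonneg_left hEk_lo hMN.le
    have hchain := (hloP.trans (hp (Q ^ N * Ek))).trans hupY
    have hexpand : M ^ N * (Real.exp α - t k) = M ^ N * Real.exp α - M ^ N * t k := by ring
    rw [hexpand] at hchain
    rw [hGdef]; linarith
  -- conclude
  have htend : Tendsto t atTop (nhds 0) := by
    have h1 := hsR.tendsto_sum_nat
    have h2 := (tendsto_const_nhds (x := Real.exp W) (f := atTop)).sub h1
    rw [sub_self] at h2
    exact h2
  have htend2 : Tendsto (fun k => 2 * M ^ N * t k) atTop (nhds 0) := by
    have h := htend.const_mul (2 * M ^ N)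
    rwa [mul_zero] at h
  obtain ⟨k, hk⟩ := (htend2.eventually (gt_mem_nhds hG0)).exists
  exact absurd (key k) (not_le.2 hk)

/-- Version of `core` with a pointwise strict separation hypothesis. -/
lemma core2 {Y : Set (Fin n → ℂ)} (hY : IsCompact Y) {q : Fin n → ℂ}
    (hq : ∀ P : MvPolynomial (Fin n) ℂ, ‖eval q P‖ ≤ supN Y P)
    {Q : MvPolynomial (Fin n) ℂ} {M : ℝ} (hM0 : 0 < M)
    (hMY : ∀ y ∈ Y, ‖eval y Q‖ ≤ M) (hQq : ‖eval q Q‖ = M)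
    (c : Fin n → ℂ)
    (hstrict : ∀ y ∈ Y, ‖eval y Q‖ = M → y ≠ q →
      (∑ j, c j * y j).re < (∑ j, c j * q j).re)
    (hqY : q ∉ Y) : False := by
  classical
  set F := Y ∩ {x | ‖eval x Q‖ = M} with hFdef
  have hclosedF : IsClosed {x : Fin n → ℂ | ‖eval x Q‖ = M} := by
    have h : {x : Fin n → ℂ | ‖eval x Q‖ = M} = (fun x => ‖eval x Q‖) ⁻¹' {M} := rfl
    rw [h]
    exact isClosed_singleton.preimage (contQ Q)
  have hFc : IsCompact F := hY.inter_right hclosedF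
  rcases F.eq_empty_or_nonempty with he | hne
  · -- empty max set: take β = value at q minus 1
    refine core hY hq hM0 hMY hQq c (β := (∑ j, c j * q j).re - 1) ?_ (by linarith)
    intro y hy hyM
    exfalso
    have : y ∈ F := ⟨hy, hyM⟩
    rw [he] at this
    exact this
  · have hu_cont : Continuous fun x : Fin n → ℂ => (∑ j, c j * x j).re := by
      apply Complex.continuous_re.comp
      exact continuous_finset_sum _ fun j _ => continuous_const.mul (continuous_apply j)
    obtain ⟨y₀, hy₀, hy₀max⟩ := exists_max hFc hne hu_cont
    have hy₀q : y₀ ≠ q := fun h => hqY (h ▸ hy₀.1)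
    refine core hY hq hM0 hMY hQq c (β := (∑ j, c j * y₀ j).re) ?_ ?_
    · intro y hy hyM
      exact hy₀max y ⟨hy, hyM⟩
    · exact hstrict y₀ hy₀.1 hy₀.2 hy₀q

end PolyHullAux

open PolyHullAux MvPolynomial in
/-- Let `X₁, X₂ ⊆ ℂⁿ` be disjoint compact sets, and `S₁ ⊆ X₁`, `S₂ ⊆ X₂`
relatively open with `S₁ ⊆ X̂₂` and `S₂ ⊆ X̂₁`.  Then
`(X₁ ∪ X₂)^ = ((X₁ \ S₁) ∪ (X₂ \ S₂))^`. -/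
theorem polyHull_union_eq_of_relOpen (n : ℕ) (X₁ X₂ S₁ S₂ : Set (Fin n → ℂ))
    (h₁ : IsCompact X₁) (h₂ : IsCompact X₂) (hd : Disjoint X₁ X₂)
    (hS₁X : S₁ ⊆ X₁) (hS₂X : S₂ ⊆ X₂)
    (hS₁open : ∃ U, IsOpen U ∧ S₁ = U ∩ X₁)
    (hS₂open : ∃ U, IsOpen U ∧ S₂ = U ∩ X₂)
    (hS₁ : S₁ ⊆ polyHull n X₂) (hS₂ : S₂ ⊆ polyHull n X₁) :
    polyHull n (X₁ ∪ X₂) = polyHull n ((X₁ \ S₁) ∪ (X₂ \ S₂)) := by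
  classical
  have hXc : IsCompact (X₁ ∪ X₂) := h₁.union h₂
  have hE'sub : (X₁ \ S₁) ∪ (X₂ \ S₂) ⊆ X₁ ∪ X₂ :=
    union_subset_union diff_subset diff_subset
  -- main sup inequality
  have main : ∀ Q : MvPolynomial (Fin n) ℂ,
      supN (X₁ ∪ X₂) Q ≤ supN ((X₁ \ S₁) ∪ (X₂ \ S₂)) Q := by
    intro Q
    by_contra hcon
    push_neg at hcon
    set m := supN ((X₁ \ S₁) ∪ (X₂ \ S₂)) Q with hmdef
    set M := supN (X₁ ∪ X₂) Q with hMdef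
    have bddE' : BddAbove ((fun y => ‖eval y Q‖) '' ((X₁ \ S₁) ∪ (X₂ \ S₂))) :=
      (bddAbove_img hXc Q).mono (image_mono hE'sub)
    have hmE : ∀ x ∈ (X₁ \ S₁) ∪ (X₂ \ S₂), ‖eval x Q‖ ≤ m := fun x hx =>
      le_csSup bddE' ⟨x, hx, rfl⟩
    have hm0 : 0 ≤ m := by
      rcases ((X₁ \ S₁) ∪ (X₂ \ S₂)).eq_empty_or_nonempty with he | ⟨x, hx⟩
      · rw [hmdef, he]; simp [supN, Real.sSup_empty]
      · exact (norm_nonneg _).trans (hmE x hx)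
    have hM0 : 0 < M := lt_of_le_of_lt hm0 hcon
    have hXne : (X₁ ∪ X₂).Nonempty := by
      rcases (X₁ ∪ X₂).eq_empty_or_nonempty with he | h
      · exfalso; rw [hMdef, he] at hM0; simp [supN, Real.sSup_empty] at hM0
      · exact h
    have hMmem : ∀ x ∈ X₁ ∪ X₂, ‖eval x Q‖ ≤ M := fun x hx => le_supN hXc hx Q
    -- both partial sups equal M
    have ht₂ : supN X₂ Q = M := by
      refine le_antisymm (supN_mono hXc subset_union_right Q) ?_
      by_contra h'
      push_neg at h'
      obtain ⟨z, hz, hzmax⟩ := exists_max hXc hXne (contQ Q)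
      have hzM : ‖eval z Q‖ = M := (supN_eq_max hXc hz hzmax).symm
      rcases hz with hz₁ | hz₂
      · by_cases hzS : z ∈ S₁
        · have := hS₁ hzS Q
          rw [hzM] at this
          exact absurd this (not_le.2 h')
        · have := hmE z (Or.inl ⟨hz₁, hzS⟩)
          rw [hzM] at this
          exact absurd this (not_le.2 hcon)
      · have := le_supN h₂ hz₂ Q
        rw [hzM] at this
        exact absurd this (not_le.2 h')
    have ht₁ : supN X₁ Q = M := by
      refine le_antisymm (supN_mono hXc subset_union_left Q) ?_
      by_contra h'
      push_neg at h'
      obtain ⟨z, hz, hzmax⟩ := exists_max hXc hXne (contQ Q)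
      have hzM : ‖eval z Q‖ = M := (supN_eq_max hXc hz hzmax).symm
      rcases hz with hz₁ | hz₂
      · have := le_supN h₁ hz₁ Q
        rw [hzM] at this
        exact absurd this (not_le.2 h')
      · by_cases hzS : z ∈ S₂
        · have := hS₂ hzS Q
          rw [hzM] at this
          exact absurd this (not_le.2 h')
        · have := hmE z (Or.inr ⟨hz₂, hzS⟩)
          rw [hzM] at this
          exact absurd this (not_le.2 hcon)
    -- maximum sets
    set F₁ := X₁ ∩ {x | ‖eval x Q‖ = M} with hF₁def
    set F₂ := X₂ ∩ {x | ‖eval x Q‖ = M} with hF₂def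
    have hclosed : IsClosed {x : Fin n → ℂ | ‖eval x Q‖ = M} := by
      have : {x : Fin n → ℂ | ‖eval x Q‖ = M} = (fun x => ‖eval x Q‖) ⁻¹' {M} := rfl
      rw [this]; exact isClosed_singleton.preimage (contQ Q)
    have hF₁c : IsCompact F₁ := h₁.inter_right hclosed
    have hF₂c : IsCompact F₂ := h₂.inter_right hclosed
    have hX₁ne : X₁.Nonempty := by
      rcases X₁.eq_empty_or_nonempty with he | h
      · exfalso; rw [he] at ht₁; rw [← ht₁] at hM0; simp [supN, Real.sSup_empty] at hM0
      · exact h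
    have hX₂ne : X₂.Nonempty := by
      rcases X₂.eq_empty_or_nonempty with he | h
      · exfalso; rw [he] at ht₂; rw [← ht₂] at hM0; simp [supN, Real.sSup_empty] at hM0
      · exact h
    have hF₁ne : F₁.Nonempty := by
      obtain ⟨z, hz, hzmax⟩ := exists_max h₁ hX₁ne (contQ Q)
      exact ⟨z, hz, by rw [mem_setOf_eq, ← (supN_eq_max h₁ hz hzmax), ht₁]⟩
    have hF₂ne : F₂.Nonempty := by
      obtain ⟨z, hz, hzmax⟩ := exists_max h₂ hX₂ne (contQ Q)
      exact ⟨z, hz, by rw [mem_setOf_eq, ← (supN_eq_max h₂ hz hzmax), ht₂]⟩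
    have hF₁S : F₁ ⊆ S₁ := by
      intro x hx
      by_contra hxS
      have := hmE x (Or.inl ⟨hx.1, hxS⟩)
      rw [hx.2] at this
      exact absurd this (not_le.2 hcon)
    have hF₂S : F₂ ⊆ S₂ := by
      intro x hx
      by_contra hxS
      have := hmE x (Or.inr ⟨hx.1, hxS⟩)
      rw [hx.2] at this
      exact absurd this (not_le.2 hcon)
    -- geometric separation: farthest point
    have hKc : IsCompact (F₁ ∪ F₂) := hF₁c.union hF₂c
    have hKne : (F₁ ∪ F₂).Nonempty := hF₁ne.inl
    have hnsq_cont : Continuous fun x : Fin n → ℂ => ∑ j, Complex.normSq (x j) :=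
      continuous_finset_sum _ fun j _ => Complex.continuous_normSq.comp (continuous_apply j)
    obtain ⟨q, hq, hqmax⟩ := exists_max hKc hKne hnsq_cont
    set c : Fin n → ℂ := fun j => (starRingEnd ℂ) (q j) with hcdef
    have identity : ∀ x : Fin n → ℂ, (∑ j, c j * x j).re =
        ((∑ j, Complex.normSq (x j)) + (∑ j, Complex.normSq (q j))
          - ∑ j, Complex.normSq (x j - q j)) / 2 := by
      intro x
      have hper : ∀ j, (c j * x j).re =
          (Complex.normSq (x j) + Complex.normSq (q j) - Complex.normSq (x j - q j)) / 2 := by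
        intro j
        have h := Complex.normSq_sub (x j) (q j)
        rw [hcdef]
        simp only
        rw [mul_comm]
        linarith
      rw [Complex.re_sum, Finset.sum_congr rfl fun j _ => hper j, ← Finset.sum_div,
        Finset.sum_sub_distrib, Finset.sum_add_distrib]
    have hstrict : ∀ x ∈ F₁ ∪ F₂, x ≠ q →
        (∑ j, c j * x j).re < (∑ j, c j * q j).re := by
      intro x hx hne
      have hx_id := identity x
      have hq_id := identity q
      have h1 : ∑ j, Complex.normSq (x j) ≤ ∑ j, Complex.normSq (q j) := hqmax x hx
      obtain ⟨j₀, hj₀⟩ := Function.ne_iff.1 hne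
      have h2 : 0 < ∑ j, Complex.normSq (x j - q j) :=
        Finset.sum_pos' (fun j _ => Complex.normSq_nonneg _)
          ⟨j₀, Finset.mem_univ _, Complex.normSq_pos.2 (sub_ne_zero.2 hj₀)⟩
      have h3 : ∑ j, Complex.normSq (q j - q j) = (0:ℝ) := by simp
      rw [hx_id, hq_id, h3]
      linarith
    -- apply core2 depending on where q lies
    rcases hq with hq₁ | hq₂
    · have hqS₁ : q ∈ S₁ := hF₁S hq₁
      have hqhull : ∀ P : MvPolynomial (Fin n) ℂ, ‖eval q P‖ ≤ supN X₂ P :=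
        fun P => hS₁ hqS₁ P
      have hqX₂ : q ∉ X₂ := disjoint_left.1 hd hq₁.1
      exact core2 h₂ hqhull hM0
        (fun y hy => le_of_le_of_eq (le_supN h₂ hy Q) ht₂) hq₁.2 c
        (fun y hy hyM hne => hstrict y (Or.inr ⟨hy, hyM⟩) hne) hqX₂
    · have hqS₂ : q ∈ S₂ := hF₂S hq₂
      have hqhull : ∀ P : MvPolynomial (Fin n) ℂ, ‖eval q P‖ ≤ supN X₁ P :=
        fun P => hS₂ hqS₂ P
      have hqX₁ : q ∉ X₁ := disjoint_right.1 hd hq₂.1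
      exact core2 h₁ hqhull hM0
        (fun y hy => le_of_le_of_eq (le_supN h₁ hy Q) ht₁) hq₂.2 c
        (fun y hy hyM hne => hstrict y (Or.inl ⟨hy, hyM⟩) hne) hqX₁
  -- conclude set equality
  ext x
  constructor
  · intro hx Q
    exact (hx Q).trans (main Q)
  · intro hx Q
    exact (hx Q).trans (supN_mono hXc hE'sub Q)
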